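/- Suppose there exist C¹ functions A, B : ℝ⁵ → ℂ such that [L̄, T] f = A·(T f) + B·(S f) for every smooth f : ℝ⁵ → ℂ. Then for every smooth f: [L̄, S] f = L(A)·(T f) + (L(B) + A)·(S f) + B·([L, S] f). (This is the paper's boxed bracket [S, L̄] = −L(A)·T − (L(B)+A)·S − B·R, with R := [L, S], for General Class III₂.) -/

import Mathlib

noncomputable section
open Complex ComplexConjugate

/-- Points of `ℝ⁵`, with coordinates `(x, y, u₁, u₂, u₃)` and `z = x + i y`. -/
abbrev V5 := Fin 5 → ℝ

/-- Partial derivative in the `j`-th coordinate direction. -/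
def pd (j : Fin 5) (f : V5 → ℂ) : V5 → ℂ := fun p => fderiv ℝ f p (Pi.single j 1)

/-- Wirtinger derivative `f_z := (f_x − i f_y)/2`. -/
def wz (f : V5 → ℂ) : V5 → ℂ := fun p => (pd 0 f p - I * pd 1 f p) / 2

/-- Wirtinger derivative `f_z̄ := (f_x + i f_y)/2`. -/
def wzb (f : V5 → ℂ) : V5 → ℂ := fun p => (pd 0 f p + I * pd 1 f p) / 2

variable (a₁ a₂ a₃ : V5 → ℂ)

/-- The operator `L f := f_z + a₁ f_{u₁} + a₂ f_{u₂} + a₃ f_{u₃}`. -/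
def Lop (f : V5 → ℂ) : V5 → ℂ := fun p =>
  wz f p + a₁ p * pd 2 f p + a₂ p * pd 3 f p + a₃ p * pd 4 f p

/-- The operator `L̄ f := f_z̄ + ā₁ f_{u₁} + ā₂ f_{u₂} + ā₃ f_{u₃}`. -/
def Lbop (f : V5 → ℂ) : V5 → ℂ := fun p =>
  wzb f p + conj (a₁ p) * pd 2 f p + conj (a₂ p) * pd 3 f p + conj (a₃ p) * pd 4 f p

/-- The operator `T := i·[L, L̄]`. -/
def Tof (f : V5 → ℂ) : V5 → ℂ := fun p =>
  I * (Lop a₁ a₂ a₃ (Lbop a₁ a₂ a₃ f) p - Lbop a₁ a₂ a₃ (Lop a₁ a₂ a₃ f) p)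

/-- The operator `S := [L, T]`. -/
def Sof (f : V5 → ℂ) : V5 → ℂ := fun p =>
  Lop a₁ a₂ a₃ (Tof a₁ a₂ a₃ f) p - Tof a₁ a₂ a₃ (Lop a₁ a₂ a₃ f) p

/-- The operator `S̄ := [L̄, T]`. -/
def Sbof (f : V5 → ℂ) : V5 → ℂ := fun p =>
  Lbop a₁ a₂ a₃ (Tof a₁ a₂ a₃ f) p - Tof a₁ a₂ a₃ (Lbop a₁ a₂ a₃ f) p

-- smoothness
lemma contDiff_pd {f : V5 → ℂ} (hf : ContDiff ℝ (⊤ : ℕ∞) f) (j : Fin 5) :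
    ContDiff ℝ (⊤ : ℕ∞) (pd j f) := by
  have h1 : ContDiff ℝ (⊤ : ℕ∞) (fderiv ℝ f) := hf.fderiv_right (m := (⊤:ℕ∞)) (by simp)
  exact (ContinuousLinearMap.apply ℝ ℂ (Pi.single j 1)).contDiff.comp h1

lemma contDiff_wz {f : V5 → ℂ} (hf : ContDiff ℝ (⊤ : ℕ∞) f) : ContDiff ℝ (⊤ : ℕ∞) (wz f) := by
  unfold wz
  exact ((contDiff_pd hf 0).sub (contDiff_const.mul (contDiff_pd hf 1))).div_const 2

lemma contDiff_wzb {f : V5 → ℂ} (hf : ContDiff ℝ (⊤ : ℕ∞) f) : ContDiff ℝ (⊤ : ℕ∞) (wzb f) := by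
  unfold wzb
  exact ((contDiff_pd hf 0).add (contDiff_const.mul (contDiff_pd hf 1))).div_const 2

lemma contDiff_conj {g : V5 → ℂ} (hg : ContDiff ℝ (⊤ : ℕ∞) g) :
    ContDiff ℝ (⊤ : ℕ∞) (fun p => conj (g p)) := by
  have hc : ContDiff ℝ (⊤ : ℕ∞) (⇑(RCLike.conjCLE (K := ℂ)) ∘ g) :=
    (RCLike.conjCLE (K := ℂ)).contDiff.comp hg
  simpa [Function.comp_def, RCLike.conjCLE_apply] using hc

variable (ha₁ : ContDiff ℝ (⊤ : ℕ∞) a₁) (ha₂ : ContDiff ℝ (⊤ : ℕ∞) a₂)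
  (ha₃ : ContDiff ℝ (⊤ : ℕ∞) a₃)

include ha₁ ha₂ ha₃ in
lemma contDiff_Lop {f : V5 → ℂ} (hf : ContDiff ℝ (⊤ : ℕ∞) f) :
    ContDiff ℝ (⊤ : ℕ∞) (Lop a₁ a₂ a₃ f) := by
  unfold Lop
  exact (((contDiff_wz hf).add (ha₁.mul (contDiff_pd hf 2))).add
    (ha₂.mul (contDiff_pd hf 3))).add (ha₃.mul (contDiff_pd hf 4))

include ha₁ ha₂ ha₃ in
lemma contDiff_Lbop {f : V5 → ℂ} (hf : ContDiff ℝ (⊤ : ℕ∞) f) :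
    ContDiff ℝ (⊤ : ℕ∞) (Lbop a₁ a₂ a₃ f) := by
  unfold Lbop
  exact (((contDiff_wzb hf).add ((contDiff_conj ha₁).mul (contDiff_pd hf 2))).add
    ((contDiff_conj ha₂).mul (contDiff_pd hf 3))).add ((contDiff_conj ha₃).mul (contDiff_pd hf 4))

include ha₁ ha₂ ha₃ in
lemma contDiff_Tof {f : V5 → ℂ} (hf : ContDiff ℝ (⊤ : ℕ∞) f) :
    ContDiff ℝ (⊤ : ℕ∞) (Tof a₁ a₂ a₃ f) := by
  unfold Tof
  exact contDiff_const.mul ((contDiff_Lop a₁ a₂ a₃ ha₁ ha₂ ha₃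
      (contDiff_Lbop a₁ a₂ a₃ ha₁ ha₂ ha₃ hf)).sub
    (contDiff_Lbop a₁ a₂ a₃ ha₁ ha₂ ha₃ (contDiff_Lop a₁ a₂ a₃ ha₁ ha₂ ha₃ hf)))

include ha₁ ha₂ ha₃ in
lemma contDiff_Sof {f : V5 → ℂ} (hf : ContDiff ℝ (⊤ : ℕ∞) f) :
    ContDiff ℝ (⊤ : ℕ∞) (Sof a₁ a₂ a₃ f) := by
  unfold Sof
  exact (contDiff_Lop a₁ a₂ a₃ ha₁ ha₂ ha₃ (contDiff_Tof a₁ a₂ a₃ ha₁ ha₂ ha₃ hf)).sub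
    (contDiff_Tof a₁ a₂ a₃ ha₁ ha₂ ha₃ (contDiff_Lop a₁ a₂ a₃ ha₁ ha₂ ha₃ hf))

lemma diffAt {f : V5 → ℂ} (hf : ContDiff ℝ (⊤ : ℕ∞) f) (p : V5) : DifferentiableAt ℝ f p :=
  (hf.differentiable (by simp)).differentiableAt

section ptwise
variable {f g : V5 → ℂ} {p : V5}

lemma pd_sub (hf : DifferentiableAt ℝ f p) (hg : DifferentiableAt ℝ g p) (j : Fin 5) :
    pd j (fun q => f q - g q) p = pd j f p - pd j g p := by
  simp [pd, fderiv_fun_sub hf hg]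

lemma pd_add (hf : DifferentiableAt ℝ f p) (hg : DifferentiableAt ℝ g p) (j : Fin 5) :
    pd j (fun q => f q + g q) p = pd j f p + pd j g p := by
  simp [pd, fderiv_fun_add hf hg]

lemma pd_mul (hf : DifferentiableAt ℝ f p) (hg : DifferentiableAt ℝ g p) (j : Fin 5) :
    pd j (fun q => f q * g q) p = pd j f p * g p + f p * pd j g p := by
  simp [pd, fderiv_fun_mul hf hg, smul_eq_mul]
  ring

lemma pd_comb (hf : DifferentiableAt ℝ f p) (hg : DifferentiableAt ℝ g p) (c : ℂ) (j : Fin 5) :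
    pd j (fun q => f q + c * g q) p = pd j f p + c * pd j g p := by
  rw [pd, fderiv_fun_add hf (hg.const_mul c), fderiv_const_mul hg c]
  simp [pd, smul_eq_mul]

lemma wz_sub (hf : DifferentiableAt ℝ f p) (hg : DifferentiableAt ℝ g p) :
    wz (fun q => f q - g q) p = wz f p - wz g p := by
  simp only [wz, pd_sub hf hg]; ring

lemma wz_add (hf : DifferentiableAt ℝ f p) (hg : DifferentiableAt ℝ g p) :
    wz (fun q => f q + g q) p = wz f p + wz g p := by
  simp only [wz, pd_add hf hg]; ring

lemma wz_mul (hf : DifferentiableAt ℝ f p) (hg : DifferentiableAt ℝ g p) :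
    wz (fun q => f q * g q) p = wz f p * g p + f p * wz g p := by
  simp only [wz, pd_mul hf hg]; ring

lemma wz_comb (hf : DifferentiableAt ℝ f p) (hg : DifferentiableAt ℝ g p) (c : ℂ) :
    wz (fun q => f q + c * g q) p = wz f p + c * wz g p := by
  simp only [wz, pd_comb hf hg]; ring

lemma wzb_sub (hf : DifferentiableAt ℝ f p) (hg : DifferentiableAt ℝ g p) :
    wzb (fun q => f q - g q) p = wzb f p - wzb g p := by
  simp only [wzb, pd_sub hf hg]; ring

lemma wzb_add (hf : DifferentiableAt ℝ f p) (hg : DifferentiableAt ℝ g p) :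
    wzb (fun q => f q + g q) p = wzb f p + wzb g p := by
  simp only [wzb, pd_add hf hg]; ring

lemma wzb_comb (hf : DifferentiableAt ℝ f p) (hg : DifferentiableAt ℝ g p) (c : ℂ) :
    wzb (fun q => f q + c * g q) p = wzb f p + c * wzb g p := by
  simp only [wzb, pd_comb hf hg]; ring

lemma Lop_sub (hf : DifferentiableAt ℝ f p) (hg : DifferentiableAt ℝ g p) :
    Lop a₁ a₂ a₃ (fun q => f q - g q) p = Lop a₁ a₂ a₃ f p - Lop a₁ a₂ a₃ g p := by
  simp only [Lop, wz_sub hf hg, pd_sub hf hg]; ring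

lemma Lop_add (hf : DifferentiableAt ℝ f p) (hg : DifferentiableAt ℝ g p) :
    Lop a₁ a₂ a₃ (fun q => f q + g q) p = Lop a₁ a₂ a₃ f p + Lop a₁ a₂ a₃ g p := by
  simp only [Lop, wz_add hf hg, pd_add hf hg]; ring

lemma Lop_mul (hf : DifferentiableAt ℝ f p) (hg : DifferentiableAt ℝ g p) :
    Lop a₁ a₂ a₃ (fun q => f q * g q) p
      = Lop a₁ a₂ a₃ f p * g p + f p * Lop a₁ a₂ a₃ g p := by
  simp only [Lop, wz_mul hf hg, pd_mul hf hg]; ring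

lemma Lop_comb (hf : DifferentiableAt ℝ f p) (hg : DifferentiableAt ℝ g p) (c : ℂ) :
    Lop a₁ a₂ a₃ (fun q => f q + c * g q) p = Lop a₁ a₂ a₃ f p + c * Lop a₁ a₂ a₃ g p := by
  simp only [Lop, wz_comb hf hg, pd_comb hf hg]; ring

lemma Lbop_sub (hf : DifferentiableAt ℝ f p) (hg : DifferentiableAt ℝ g p) :
    Lbop a₁ a₂ a₃ (fun q => f q - g q) p = Lbop a₁ a₂ a₃ f p - Lbop a₁ a₂ a₃ g p := by
  simp only [Lbop, wzb_sub hf hg, pd_sub hf hg]; ring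

lemma Lbop_comb (hf : DifferentiableAt ℝ f p) (hg : DifferentiableAt ℝ g p) (c : ℂ) :
    Lbop a₁ a₂ a₃ (fun q => f q + c * g q) p
      = Lbop a₁ a₂ a₃ f p + c * Lbop a₁ a₂ a₃ g p := by
  simp only [Lbop, wzb_comb hf hg, pd_comb hf hg]; ring

end ptwise

include ha₁ ha₂ ha₃ in
lemma Tof_comb {g h : V5 → ℂ} (hg : ContDiff ℝ (⊤ : ℕ∞) g) (hh : ContDiff ℝ (⊤ : ℕ∞) h)
    (c : ℂ) (p : V5) :
    Tof a₁ a₂ a₃ (fun q => g q + c * h q) p = Tof a₁ a₂ a₃ g p + c * Tof a₁ a₂ a₃ h p := by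
  have hLbfun : Lbop a₁ a₂ a₃ (fun q => g q + c * h q)
      = fun q => Lbop a₁ a₂ a₃ g q + c * Lbop a₁ a₂ a₃ h q :=
    funext fun q => Lbop_comb a₁ a₂ a₃ (diffAt hg q) (diffAt hh q) c
  have hLfun : Lop a₁ a₂ a₃ (fun q => g q + c * h q)
      = fun q => Lop a₁ a₂ a₃ g q + c * Lop a₁ a₂ a₃ h q :=
    funext fun q => Lop_comb a₁ a₂ a₃ (diffAt hg q) (diffAt hh q) c
  simp only [Tof, hLbfun, hLfun]
  rw [Lop_comb a₁ a₂ a₃ (diffAt (contDiff_Lbop a₁ a₂ a₃ ha₁ ha₂ ha₃ hg) p)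
        (diffAt (contDiff_Lbop a₁ a₂ a₃ ha₁ ha₂ ha₃ hh) p) c,
      Lbop_comb a₁ a₂ a₃ (diffAt (contDiff_Lop a₁ a₂ a₃ ha₁ ha₂ ha₃ hg) p)
        (diffAt (contDiff_Lop a₁ a₂ a₃ ha₁ ha₂ ha₃ hh) p) c]
  ring

/-- The paper's boxed bracket for General Class III₂: if `[L̄, T] = A·T + B·S` with `A, B`
of class `C¹`, then `[L̄, S] = L(A)·T + (L(B) + A)·S + B·[L, S]`. -/
theorem class_III₂_bracket_Lbar_S
    (ha₁ : ContDiff ℝ (⊤ : ℕ∞) a₁) (ha₂ : ContDiff ℝ (⊤ : ℕ∞) a₂)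
    (ha₃ : ContDiff ℝ (⊤ : ℕ∞) a₃) (A B : V5 → ℂ)
    (hA : ContDiff ℝ 1 A) (hB : ContDiff ℝ 1 B)
    (hAB : ∀ f : V5 → ℂ, ContDiff ℝ (⊤ : ℕ∞) f → ∀ p,
        Lbop a₁ a₂ a₃ (Tof a₁ a₂ a₃ f) p - Tof a₁ a₂ a₃ (Lbop a₁ a₂ a₃ f) p
          = A p * Tof a₁ a₂ a₃ f p + B p * Sof a₁ a₂ a₃ f p) :
    ∀ f : V5 → ℂ, ContDiff ℝ (⊤ : ℕ∞) f → ∀ p,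
      Lbop a₁ a₂ a₃ (Sof a₁ a₂ a₃ f) p - Sof a₁ a₂ a₃ (Lbop a₁ a₂ a₃ f) p
        = Lop a₁ a₂ a₃ A p * Tof a₁ a₂ a₃ f p
          + (Lop a₁ a₂ a₃ B p + A p) * Sof a₁ a₂ a₃ f p
          + B p * (Lop a₁ a₂ a₃ (Sof a₁ a₂ a₃ f) p - Sof a₁ a₂ a₃ (Lop a₁ a₂ a₃ f) p) := by
  intro f hf p
  have cdL := contDiff_Lop a₁ a₂ a₃ ha₁ ha₂ ha₃ (f := f)
  have hLf : ContDiff ℝ (⊤ : ℕ∞) (Lop a₁ a₂ a₃ f) := contDiff_Lop a₁ a₂ a₃ ha₁ ha₂ ha₃ hf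
  have hLbf : ContDiff ℝ (⊤ : ℕ∞) (Lbop a₁ a₂ a₃ f) := contDiff_Lbop a₁ a₂ a₃ ha₁ ha₂ ha₃ hf
  have hTf : ContDiff ℝ (⊤ : ℕ∞) (Tof a₁ a₂ a₃ f) := contDiff_Tof a₁ a₂ a₃ ha₁ ha₂ ha₃ hf
  have hSf : ContDiff ℝ (⊤ : ℕ∞) (Sof a₁ a₂ a₃ f) := contDiff_Sof a₁ a₂ a₃ ha₁ ha₂ ha₃ hf
  have hLTf : ContDiff ℝ (⊤ : ℕ∞) (Lop a₁ a₂ a₃ (Tof a₁ a₂ a₃ f)) :=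
    contDiff_Lop a₁ a₂ a₃ ha₁ ha₂ ha₃ hTf
  have hTLf : ContDiff ℝ (⊤ : ℕ∞) (Tof a₁ a₂ a₃ (Lop a₁ a₂ a₃ f)) :=
    contDiff_Tof a₁ a₂ a₃ ha₁ ha₂ ha₃ hLf
  have hTLbf : ContDiff ℝ (⊤ : ℕ∞) (Tof a₁ a₂ a₃ (Lbop a₁ a₂ a₃ f)) :=
    contDiff_Tof a₁ a₂ a₃ ha₁ ha₂ ha₃ hLbf
  have hA' : DifferentiableAt ℝ A p := (hA.differentiable one_ne_zero).differentiableAt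
  have hB' : DifferentiableAt ℝ B p := (hB.differentiable one_ne_zero).differentiableAt
  -- h1 : expand Lbop of Sof f
  have h1 : Lbop a₁ a₂ a₃ (Sof a₁ a₂ a₃ f) p
      = Lbop a₁ a₂ a₃ (Lop a₁ a₂ a₃ (Tof a₁ a₂ a₃ f)) p
        - Lbop a₁ a₂ a₃ (Tof a₁ a₂ a₃ (Lop a₁ a₂ a₃ f)) p := by
    have hs : Sof a₁ a₂ a₃ f
        = fun q => Lop a₁ a₂ a₃ (Tof a₁ a₂ a₃ f) q - Tof a₁ a₂ a₃ (Lop a₁ a₂ a₃ f) q := rfl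
    rw [hs, Lbop_sub a₁ a₂ a₃ (diffAt hLTf p) (diffAt hTLf p)]
  -- h4 : commutator swap on Tof f
  have h4 : Lbop a₁ a₂ a₃ (Lop a₁ a₂ a₃ (Tof a₁ a₂ a₃ f)) p
      = Lop a₁ a₂ a₃ (Lbop a₁ a₂ a₃ (Tof a₁ a₂ a₃ f)) p
        + I * Tof a₁ a₂ a₃ (Tof a₁ a₂ a₃ f) p := by
    have h : Tof a₁ a₂ a₃ (Tof a₁ a₂ a₃ f) p
        = I * (Lop a₁ a₂ a₃ (Lbop a₁ a₂ a₃ (Tof a₁ a₂ a₃ f)) p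
          - Lbop a₁ a₂ a₃ (Lop a₁ a₂ a₃ (Tof a₁ a₂ a₃ f)) p) := rfl
    rw [h]
    linear_combination (Lbop a₁ a₂ a₃ (Lop a₁ a₂ a₃ (Tof a₁ a₂ a₃ f)) p
      - Lop a₁ a₂ a₃ (Lbop a₁ a₂ a₃ (Tof a₁ a₂ a₃ f)) p) * Complex.I_sq
  -- h5 : hAB applied to Lop f
  have h5 : Lbop a₁ a₂ a₃ (Tof a₁ a₂ a₃ (Lop a₁ a₂ a₃ f)) p
      = Tof a₁ a₂ a₃ (Lbop a₁ a₂ a₃ (Lop a₁ a₂ a₃ f)) p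
        + (A p * Tof a₁ a₂ a₃ (Lop a₁ a₂ a₃ f) p + B p * Sof a₁ a₂ a₃ (Lop a₁ a₂ a₃ f) p) := by
    linear_combination hAB (Lop a₁ a₂ a₃ f) hLf p
  -- h67 : Leibniz expansion of Lop (Lbop (Tof f))
  have h67 : Lop a₁ a₂ a₃ (Lbop a₁ a₂ a₃ (Tof a₁ a₂ a₃ f)) p
      = Lop a₁ a₂ a₃ (Tof a₁ a₂ a₃ (Lbop a₁ a₂ a₃ f)) p
        + (Lop a₁ a₂ a₃ A p * Tof a₁ a₂ a₃ f p + A p * Lop a₁ a₂ a₃ (Tof a₁ a₂ a₃ f) p)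
        + (Lop a₁ a₂ a₃ B p * Sof a₁ a₂ a₃ f p + B p * Lop a₁ a₂ a₃ (Sof a₁ a₂ a₃ f) p) := by
    have hfun : Lbop a₁ a₂ a₃ (Tof a₁ a₂ a₃ f)
        = fun q => Tof a₁ a₂ a₃ (Lbop a₁ a₂ a₃ f) q
          + (A q * Tof a₁ a₂ a₃ f q + B q * Sof a₁ a₂ a₃ f q) :=
      funext fun q => by linear_combination hAB f hf q
    have d1 : DifferentiableAt ℝ (Tof a₁ a₂ a₃ (Lbop a₁ a₂ a₃ f)) p := diffAt hTLbf p
    have d2 : DifferentiableAt ℝ (fun q => A q * Tof a₁ a₂ a₃ f q) p :=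
      hA'.mul (diffAt hTf p)
    have d3 : DifferentiableAt ℝ (fun q => B q * Sof a₁ a₂ a₃ f q) p :=
      hB'.mul (diffAt hSf p)
    have d23 : DifferentiableAt ℝ
        (fun q => A q * Tof a₁ a₂ a₃ f q + B q * Sof a₁ a₂ a₃ f q) p := d2.add d3
    rw [hfun, Lop_add a₁ a₂ a₃ d1 d23, Lop_add a₁ a₂ a₃ d2 d3,
      Lop_mul a₁ a₂ a₃ hA' (diffAt hTf p), Lop_mul a₁ a₂ a₃ hB' (diffAt hSf p)]
    ring
  -- h8 : swap inside Tof
  have h8 : Tof a₁ a₂ a₃ (Lop a₁ a₂ a₃ (Lbop a₁ a₂ a₃ f)) p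
      = Tof a₁ a₂ a₃ (Lbop a₁ a₂ a₃ (Lop a₁ a₂ a₃ f)) p
        + (-I) * Tof a₁ a₂ a₃ (Tof a₁ a₂ a₃ f) p := by
    have hfun2 : Lop a₁ a₂ a₃ (Lbop a₁ a₂ a₃ f)
        = fun q => Lbop a₁ a₂ a₃ (Lop a₁ a₂ a₃ f) q + (-I) * Tof a₁ a₂ a₃ f q :=
      funext fun q => by
        have h : Tof a₁ a₂ a₃ f q
            = I * (Lop a₁ a₂ a₃ (Lbop a₁ a₂ a₃ f) q - Lbop a₁ a₂ a₃ (Lop a₁ a₂ a₃ f) q) := rfl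
        rw [h]
        linear_combination (Lop a₁ a₂ a₃ (Lbop a₁ a₂ a₃ f) q
          - Lbop a₁ a₂ a₃ (Lop a₁ a₂ a₃ f) q) * Complex.I_sq
    rw [hfun2]
    exact Tof_comb a₁ a₂ a₃ ha₁ ha₂ ha₃
      (contDiff_Lbop a₁ a₂ a₃ ha₁ ha₂ ha₃ hLf) hTf (-I) p
  have e1 : Sof a₁ a₂ a₃ (Lbop a₁ a₂ a₃ f) p
      = Lop a₁ a₂ a₃ (Tof a₁ a₂ a₃ (Lbop a₁ a₂ a₃ f)) p
        - Tof a₁ a₂ a₃ (Lop a₁ a₂ a₃ (Lbop a₁ a₂ a₃ f)) p := rfl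
  have e3 : Sof a₁ a₂ a₃ f p
      = Lop a₁ a₂ a₃ (Tof a₁ a₂ a₃ f) p - Tof a₁ a₂ a₃ (Lop a₁ a₂ a₃ f) p := rfl
  linear_combination h1 + h4 + h67 - h5 - e1 + h8 - A p * e3

end
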